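/- There is no n ∈ ℕ with h_{n+i} < 0 for all i = 0, 1, 2, 3, 4, 5. -/
import Mathlib


def t (n : ℕ) : ℤ := (-1) ^ ((Nat.digits 2 n).sum)

def h : ℕ → ℤ
  | 0 => 0
  | 1 => 1
  | (n + 2) => t (n + 2) * h (n + 1) + h n

lemma h_rec (n : ℕ) : h (n + 2) = t (n + 2) * h (n + 1) + h n := rfl

lemma t_pm (n : ℕ) : t n = 1 ∨ t n = -1 := by
  unfold t
  rcases Nat.even_or_odd ((Nat.digits 2 n).sum) with hp | hp
  · left; exact hp.neg_one_pow
  · right; exact hp.neg_one_pow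

lemma t_even (n : ℕ) : t (2 * n) = t n := by
  rcases Nat.eq_zero_or_pos n with rfl | hn
  · rfl
  · unfold t
    rw [Nat.digits_def' (by norm_num : (1:ℕ) < 2) (by omega : 0 < 2 * n)]
    simp [Nat.mul_div_cancel_left _ (by norm_num : 0 < 2), Nat.mul_mod_right]

lemma t_odd (n : ℕ) : t (2 * n + 1) = -t n := by
  unfold t
  rw [Nat.digits_def' (by norm_num : (1:ℕ) < 2) (by omega : 0 < 2 * n + 1)]
  have h1 : (2 * n + 1) % 2 = 1 := by omega
  have h2 : (2 * n + 1) / 2 = n := by omega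
  rw [h1, h2]
  simp [pow_succ, pow_add, mul_comm]

lemma t42 (k : ℕ) : t (4 * k + 2) = -t k := by
  have : 4 * k + 2 = 2 * (2 * k + 1) := by ring
  rw [this, t_even, t_odd]

lemma t43 (k : ℕ) : t (4 * k + 3) = t k := by
  have : 4 * k + 3 = 2 * (2 * k + 1) + 1 := by ring
  rw [this, t_odd, t_odd, neg_neg]

lemma t44 (k : ℕ) : t (4 * k + 4) = t (k + 1) := by
  have : 4 * k + 4 = 2 * (2 * (k + 1)) := by ring
  rw [this, t_even, t_even]

lemma t45 (k : ℕ) : t (4 * k + 5) = -t (k + 1) := by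
  have : 4 * k + 5 = 2 * (2 * (k + 1)) + 1 := by ring
  rw [this, t_odd, t_even]

lemma inv : ∀ k : ℕ, 1 ≤ k → 1 ≤ t k * h (4 * k + 1) ∧ h (4 * k) ≤ -1 := by
  intro k
  induction k with
  | zero => omega
  | succ k ih =>
    intro _
    rcases Nat.eq_zero_or_pos k with rfl | hk
    · have t0 : t 0 = 1 := by simp [t]
      have T1 : t 1 = -1 := by simpa [t0] using t_odd 0
      have T2 : t 2 = -1 := by simpa [T1] using t_even 1
      have T3 : t 3 = 1 := by simpa [T1] using t_odd 1
      have T4 : t 4 = -1 := by simpa [T2] using t_even 2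
      have T5 : t 5 = 1 := by simpa [T2] using t_odd 2
      constructor
      · show 1 ≤ t 1 * h 5
        norm_num [h, T1, T2, T3, T4, T5]
      · show h 4 ≤ -1
        norm_num [h, T2, T3, T4]
    · obtain ⟨hx, hy⟩ := ih hk
      have e2 : h (4 * k + 2) = t (4 * k + 2) * h (4 * k + 1) + h (4 * k) := h_rec _
      have e3 : h (4 * k + 3) = t (4 * k + 3) * h (4 * k + 2) + h (4 * k + 1) := h_rec _
      have e4 : h (4 * k + 4) = t (4 * k + 4) * h (4 * k + 3) + h (4 * k + 2) := h_rec _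
      have e5 : h (4 * k + 5) = t (4 * k + 5) * h (4 * k + 4) + h (4 * k + 3) := h_rec _
      rw [t42] at e2; rw [t43] at e3; rw [t44] at e4; rw [t45] at e5
      have g1 : 4 * (k + 1) + 1 = 4 * k + 5 := by ring
      have g2 : 4 * (k + 1) = 4 * k + 4 := by ring
      rw [g1, g2]
      rcases t_pm k with ha | ha <;> rcases t_pm (k + 1) with hb | hb <;>
        rw [ha] at hx e2 e3 <;> rw [hb] at e4 e5 ⊢ <;>
        constructor <;> linarith

lemma pos34 (m : ℕ) : 0 ≤ h (4 * m + 1) ∨ 0 ≤ h (4 * m + 3) := by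
  rcases Nat.eq_zero_or_pos m with rfl | hm
  · left
    show (0:ℤ) ≤ h 1
    norm_num [h]
  · obtain ⟨hx, hy⟩ := inv m hm
    have e2 : h (4 * m + 2) = t (4 * m + 2) * h (4 * m + 1) + h (4 * m) := h_rec _
    have e3 : h (4 * m + 3) = t (4 * m + 3) * h (4 * m + 2) + h (4 * m + 1) := h_rec _
    rw [t42] at e2; rw [t43] at e3
    rcases t_pm m with ha | ha <;> rw [ha] at hx e2 e3
    · left; linarith
    · right; linarith

theorem stmt6 : ¬ ∃ n : ℕ, ∀ i : ℕ, i ≤ 5 → h (n + i) < 0 := by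
  rintro ⟨n, hn⟩
  have hd := Nat.div_add_mod n 4
  have hr : n % 4 < 4 := Nat.mod_lt _ (by norm_num)
  set q := n / 4 with hq
  have key : ∃ m i j : ℕ, i ≤ 5 ∧ j ≤ 5 ∧ n + i = 4 * m + 1 ∧ n + j = 4 * m + 3 := by
    interval_cases h : n % 4
    · exact ⟨q, 1, 3, by omega, by omega, by omega, by omega⟩
    · exact ⟨q, 0, 2, by omega, by omega, by omega, by omega⟩
    · exact ⟨q + 1, 3, 5, by omega, by omega, by omega, by omega⟩
    · exact ⟨q + 1, 2, 4, by omega, by omega, by omega, by omega⟩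
  obtain ⟨m, i, j, hi, hj, hmi, hmj⟩ := key
  have h1 := hn i hi
  have h2 := hn j hj
  rw [hmi] at h1
  rw [hmj] at h2
  rcases pos34 m with hp | hp <;> linarith
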